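/- arXiv:2004.09656 — 7 statements merged into one kernel-verified Lean document; each statement's English description precedes it below -/
import Mathlib

section
/- For any probability distribution p on a finite set S with support of cardinality K ≥ 1, (∑_{x∈S} √(p(x)(1−p(x))))² ≤ K − 1. -/
theorem stmt_2 {S : Type*} [Fintype S] (p : S → ℝ)
    (hp0 : ∀ x, 0 ≤ p x) (hp1 : ∀ x, p x ≤ 1)
    (hsum : ∑ x, p x = 1)
    (K : ℕ) (hK : K = (Finset.univ.filter (fun x => 0 < p x)).card)
    (hK1 : 1 ≤ K) :
    (∑ x, Real.sqrt (p x * (1 - p x)))^2 ≤ (K : ℝ) - 1 := by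
  set T := Finset.univ.filter (fun x => 0 < p x) with hT
  have hzero : ∀ x, x ∉ T → p x = 0 := by
    intro x hx
    simp only [hT, Finset.mem_filter, Finset.mem_univ, true_and, not_lt] at hx
    exact le_antisymm hx (hp0 x)
  have hsumT : ∑ x ∈ T, p x = 1 := by
    rw [← hsum]
    exact Finset.sum_subset (Finset.subset_univ T) (fun x _ hx => hzero x hx)
  have hsqT : (∑ x, Real.sqrt (p x * (1 - p x))) = ∑ x ∈ T, Real.sqrt (p x * (1 - p x)) := by
    refine (Finset.sum_subset (Finset.subset_univ T) ?_).symm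
    intro x _ hxT
    simp [hzero x hxT]
  rw [hsqT]
  have hCS : (∑ x ∈ T, Real.sqrt (p x * (1 - p x))) ^ 2 ≤
      (T.card : ℝ) * ∑ x ∈ T, (Real.sqrt (p x * (1 - p x))) ^ 2 := by
    have := sq_sum_le_card_mul_sum_sq (s := T) (f := fun x => Real.sqrt (p x * (1 - p x)))
    exact_mod_cast this
  have hsq : ∀ x ∈ T, (Real.sqrt (p x * (1 - p x))) ^ 2 = p x * (1 - p x) := by
    intro x _
    exact Real.sq_sqrt (mul_nonneg (hp0 x) (by linarith [hp1 x]))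
  rw [Finset.sum_congr rfl hsq] at hCS
  have hCS2 : (1 : ℝ) ≤ (T.card : ℝ) * ∑ x ∈ T, (p x) ^ 2 := by
    have := sq_sum_le_card_mul_sum_sq (s := T) (f := p)
    rw [hsumT] at this
    exact_mod_cast by simpa using this
  have hKcard : (K : ℝ) = (T.card : ℝ) := by exact_mod_cast congrArg Nat.cast hK
  have hKpos : (0 : ℝ) < (T.card : ℝ) := by
    have : 0 < T.card := by omega
    exact_mod_cast this
  have hexp : ∑ x ∈ T, p x * (1 - p x) = 1 - ∑ x ∈ T, (p x) ^ 2 := by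
    have : ∀ x ∈ T, p x * (1 - p x) = p x - (p x) ^ 2 := fun x _ => by ring
    rw [Finset.sum_congr rfl this, Finset.sum_sub_distrib, hsumT]
  rw [hexp] at hCS
  rw [hKcard]
  nlinarith [hCS, hCS2, hKpos]
end

section
/- Let x, y ∈ [0,1] and ζ ≥ 0 satisfy |x − y| ≤ √(2y(1−y)ζ) + ζ/3. Then √(y(1−y)) ≤ √(x(1−x)) + 2.4√ζ. -/
theorem stmt_3 (x y ζ : ℝ) (hx0 : 0 ≤ x) (hx1 : x ≤ 1)
    (hy0 : 0 ≤ y) (hy1 : y ≤ 1) (hζ : 0 ≤ ζ)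
    (h : |x - y| ≤ Real.sqrt (2 * y * (1 - y) * ζ) + ζ / 3) :
    Real.sqrt (y * (1 - y)) ≤ Real.sqrt (x * (1 - x)) + 2.4 * Real.sqrt ζ := by
  set a := Real.sqrt (y * (1 - y)) with ha
  set b := Real.sqrt (x * (1 - x)) with hb
  set s := Real.sqrt ζ with hs
  have hy' : 0 ≤ y * (1 - y) := mul_nonneg hy0 (by linarith)
  have hx' : 0 ≤ x * (1 - x) := mul_nonneg hx0 (by linarith)
  have ha0 : 0 ≤ a := Real.sqrt_nonneg _
  have hb0 : 0 ≤ b := Real.sqrt_nonneg _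
  have hs0 : 0 ≤ s := Real.sqrt_nonneg _
  have ha2 : a ^ 2 = y * (1 - y) := Real.sq_sqrt hy'
  have hb2 : b ^ 2 = x * (1 - x) := Real.sq_sqrt hx'
  have hs2 : s ^ 2 = ζ := Real.sq_sqrt hζ
  have hrw : Real.sqrt (2 * y * (1 - y) * ζ) = Real.sqrt 2 * a * s := by
    rw [ha, hs, ← Real.sqrt_mul (by norm_num : (0:ℝ) ≤ 2),
      ← Real.sqrt_mul (by positivity)]
    ring_nf
  have hc0 : 0 ≤ Real.sqrt 2 := Real.sqrt_nonneg _
  have hc2 : (Real.sqrt 2) ^ 2 = 2 := Real.sq_sqrt (by norm_num)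
  have hc15 : Real.sqrt 2 ≤ 1.5 := by
    rw [show (1.5 : ℝ) = Real.sqrt (1.5 ^ 2) from (Real.sqrt_sq (by norm_num)).symm]
    exact Real.sqrt_le_sqrt (by norm_num)
  have habs : |x - y| ≤ Real.sqrt 2 * a * s + s ^ 2 / 3 := by
    rw [← hrw, hs2]; exact h
  have hkey : a ^ 2 ≤ b ^ 2 + Real.sqrt 2 * a * s + s ^ 2 / 3 := by
    have h2 : (y - x) * (1 - x - y) ≤ |x - y| := by
      calc (y - x) * (1 - x - y) ≤ |(y - x) * (1 - x - y)| := le_abs_self _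
        _ = |y - x| * |1 - x - y| := abs_mul _ _
        _ ≤ |x - y| * 1 := by
            rw [abs_sub_comm y x]
            exact mul_le_mul_of_nonneg_left
              (abs_le.mpr ⟨by linarith, by linarith⟩) (abs_nonneg _)
        _ = |x - y| := mul_one _
    nlinarith [habs]
  by_contra hcon
  push_neg at hcon
  nlinarith [hkey, mul_nonneg ha0 hs0, mul_nonneg hb0 hs0,
    mul_nonneg hs0 hs0, mul_nonneg (by linarith : (0:ℝ) ≤ a - b - 2.4 * s) ha0,
    mul_nonneg (by linarith : (0:ℝ) ≤ a - b - 2.4 * s) hb0,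
    mul_nonneg (by linarith : (0:ℝ) ≤ a - b - 2.4 * s) hs0,
    mul_le_mul_of_nonneg_right hc15 (mul_nonneg ha0 hs0)]
end

section
/- Let p ∈ (0,1) with p ≠ 1/2 and let g(p) := (1/2 − p)/log(1/p − 1). Then for every real λ, the cumulant generating function of a centered Bernoulli(p) random variable is bounded as log(p·e^{λ(1−p)} + (1−p)·e^{−λp}) ≤ λ²·g(p)/2. -/
set_option maxHeartbeats 1000000

open Set

lemma G_nonneg_aux (p q L c : ℝ) (hp : 0 < p) (hq : 0 < q) (hpq : p + q = 1)
    (hL : 0 < L) (hpeL : p * Real.exp L = q) (hcL : 4 * L * c = 1 - 2 * p) (x : ℝ) :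
    Real.log (p * Real.exp x + q) ≤ c * x ^ 2 + p * x := by
  set E : ℝ → ℝ := fun y => p * Real.exp y + q with hEdef
  have hEpos : ∀ y, 0 < E y := fun y => by
    have := Real.exp_pos y; simp only [hEdef]; positivity
  have hEne : ∀ y : ℝ, p * Real.exp y + q ≠ 0 := fun y => (hEpos y).ne'
  set F : ℝ → ℝ := fun y => 2 * c * y + p - p * Real.exp y / E y with hFdef
  set F1 : ℝ → ℝ := fun y => 2 * c - p * q * Real.exp y / (E y) ^ 2 with hF1def
  set F2 : ℝ → ℝ := fun y => -(p * q * Real.exp y * (q - p * Real.exp y)) / (E y) ^ 3 with hF2def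
  set G : ℝ → ℝ := fun y => c * y ^ 2 + p * y - Real.log (E y) with hGdef
  have hE' : ∀ y, HasDerivAt E (p * Real.exp y) y := fun y => by
    exact ((Real.hasDerivAt_exp y).const_mul p).add_const q
  have hG' : ∀ y, HasDerivAt G (F y) y := fun y => by
    have h1 : HasDerivAt (fun z : ℝ => c * z ^ 2 + p * z)
        (c * (2 * y ^ 1) + p * 1) y :=
      ((hasDerivAt_pow 2 y).const_mul c).add ((hasDerivAt_id y).const_mul p)
    have h2 := (hE' y).log (hEpos y).ne'
    have := h1.sub h2
    exact this.congr_deriv (by simp only [hFdef]; ring)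
  have hF' : ∀ y, HasDerivAt F (F1 y) y := fun y => by
    have hD : HasDerivAt (fun z => p * Real.exp z / E z)
        ((p * Real.exp y * E y - p * Real.exp y * (p * Real.exp y)) / (E y) ^ 2) y :=
      ((Real.hasDerivAt_exp y).const_mul p).div (hE' y) (hEpos y).ne'
    have h1 : HasDerivAt (fun z : ℝ => 2 * c * z + p) (2 * c * 1) y :=
      ((hasDerivAt_id y).const_mul (2 * c)).add_const p
    have := h1.sub hD
    refine this.congr_deriv ?_
    simp only [hF1def, hEdef]
    field_simp
    ring
  have hF1' : ∀ y, HasDerivAt F1 (F2 y) y := fun y => by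
    have hden : HasDerivAt (fun z => (E z) ^ 2) (2 * E y ^ 1 * (p * Real.exp y)) y :=
      (hE' y).pow 2
    have hD : HasDerivAt (fun z => p * q * Real.exp z / (E z) ^ 2)
        ((p * q * Real.exp y * (E y) ^ 2 -
          p * q * Real.exp y * (2 * E y ^ 1 * (p * Real.exp y))) / ((E y) ^ 2) ^ 2) y :=
      ((Real.hasDerivAt_exp y).const_mul (p * q)).div hden (pow_ne_zero 2 (hEpos y).ne')
    have := (hasDerivAt_const y (2 * c)).sub hD
    refine this.congr_deriv ?_
    simp only [hF2def, hEdef]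
    field_simp
    ring
  -- values at 0, L, 2L
  have hexpL : Real.exp L = q / p := by
    field_simp at hpeL ⊢; linarith [hpeL]
  have hF0 : F 0 = 0 := by
    simp only [hFdef, hEdef, Real.exp_zero, mul_one, mul_zero, zero_add]
    rw [hpq]
    field_simp
    simp
  have hLne : L ≠ 0 := hL.ne'
  have hFL : F L = 0 := by
    simp only [hFdef, hEdef, hpeL]
    have : q + q ≠ 0 := by positivity
    field_simp
    nlinarith [hcL]
  have hexp2L : Real.exp (2 * L) = (q / p) ^ 2 := by
    rw [two_mul, Real.exp_add, hexpL]; ring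
  have hq1 : q = 1 - p := by linarith
  have hE2L : E (2 * L) = q / p := by
    simp only [hEdef, hexp2L, hq1]
    field_simp
    ring
  have hF2Lval : F (2 * L) = 0 := by
    simp only [hFdef, hE2L, hexp2L]
    have h1 : p * (q / p) ^ 2 / (q / p) = q := by
      field_simp
    rw [h1]
    nlinarith [hcL]
  have hG0 : G 0 = 0 := by
    simp only [hGdef, hEdef, Real.exp_zero, mul_one, hpq]
    simp
  have hG2L : G (2 * L) = 0 := by
    have hlogE : Real.log (E (2 * L)) = L := by
      rw [hE2L, ← hexpL, Real.log_exp]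
    simp only [hGdef, hlogE]
    nlinarith [hcL]
  -- convexity / concavity of F
  have hsignL : ∀ y < L, F2 y ≤ 0 := fun y hy => by
    have h1 : p * Real.exp y < q := by
      rw [← hpeL]
      exact (mul_lt_mul_iff_right₀ hp).2 (Real.exp_lt_exp.2 hy)
    have h2 : 0 < q - p * Real.exp y := by linarith
    simp only [hF2def]
    apply div_nonpos_of_nonpos_of_nonneg
    · have : 0 < p * q * Real.exp y := by positivity
      nlinarith
    · positivity
  have hsignR : ∀ y, L < y → 0 ≤ F2 y := fun y hy => by
    have h1 : q < p * Real.exp y := by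
      rw [← hpeL]
      exact (mul_lt_mul_iff_right₀ hp).2 (Real.exp_lt_exp.2 hy)
    have h2 : q - p * Real.exp y < 0 := by linarith
    simp only [hF2def]
    apply div_nonneg
    · have : 0 < p * q * Real.exp y := by positivity
      nlinarith
    · positivity
  have hconc : ConcaveOn ℝ (Iic L) F := by
    apply concaveOn_of_hasDerivWithinAt2_nonpos (convex_Iic L)
      (fun y _ => (hF' y).continuousAt.continuousWithinAt)
      (fun y _ => (hF' y).hasDerivWithinAt)
      (fun y _ => (hF1' y).hasDerivWithinAt)
    intro y hy
    rw [interior_Iic] at hy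
    exact hsignL y hy
  have hconv : ConvexOn ℝ (Ici L) F := by
    apply convexOn_of_hasDerivWithinAt2_nonneg (convex_Ici L)
      (fun y _ => (hF' y).continuousAt.continuousWithinAt)
      (fun y _ => (hF' y).hasDerivWithinAt)
      (fun y _ => (hF1' y).hasDerivWithinAt)
    intro y hy
    rw [interior_Ici] at hy
    exact hsignR y hy
  -- sign of F on the four intervals
  have hFneg0 : ∀ y ∈ Iic (0 : ℝ), F y ≤ 0 := by
    intro y hy
    rcases eq_or_lt_of_le (mem_Iic.1 hy) with h | h
    · rw [h, hF0]
    · have hLy : (0:ℝ) < L - y := by linarith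
      have ha : (0:ℝ) ≤ L / (L - y) := div_nonneg hL.le hLy.le
      have hb : (0:ℝ) ≤ -y / (L - y) := div_nonneg (by linarith) hLy.le
      have hab : L / (L - y) + -y / (L - y) = 1 := by
        rw [← add_div, show L + -y = L - y from by ring]
        exact div_self hLy.ne'
      have hcomb := hconc.2 (mem_Iic.2 (by linarith : y ≤ L)) (mem_Iic.2 le_rfl) ha hb hab
      have hpt : (L / (L - y)) • y + (-y / (L - y)) • L = 0 := by
        simp only [smul_eq_mul]
        field_simp
        ring
      rw [hpt, hF0] at hcomb
      simp only [smul_eq_mul, hFL, mul_zero, add_zero] at hcomb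
      have hapos : 0 < L / (L - y) := div_pos hL hLy
      have h2 : L / (L - y) * F y ≤ L / (L - y) * 0 := by linarith
      exact le_of_mul_le_mul_left h2 hapos
  have hFpos1 : ∀ y ∈ Icc (0 : ℝ) L, 0 ≤ F y := by
    intro y hy
    obtain ⟨hy0, hyL⟩ := hy
    have ha : (0:ℝ) ≤ 1 - y / L := by
      rw [sub_nonneg, div_le_one hL]; exact hyL
    have hb : (0:ℝ) ≤ y / L := div_nonneg hy0 hL.le
    have hab : (1 - y / L) + y / L = 1 := by ring
    have hcomb := hconc.2 (mem_Iic.2 (by linarith : (0:ℝ) ≤ L)) (mem_Iic.2 le_rfl) ha hb hab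
    have hpt : (1 - y / L) • (0:ℝ) + (y / L) • L = y := by
      simp only [smul_eq_mul]
      field_simp
      ring
    rw [hpt] at hcomb
    simp only [smul_eq_mul, hF0, hFL, mul_zero, add_zero] at hcomb
    exact hcomb
  have hFneg2 : ∀ y ∈ Icc L (2 * L), F y ≤ 0 := by
    intro y hy
    obtain ⟨hyL, hy2L⟩ := hy
    have ha : (0:ℝ) ≤ (2 * L - y) / L := by
      apply div_nonneg (by linarith) hL.le
    have hb : (0:ℝ) ≤ (y - L) / L := by
      apply div_nonneg (by linarith) hL.le
    have hab : (2 * L - y) / L + (y - L) / L = 1 := by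
      rw [← add_div, show 2 * L - y + (y - L) = L from by ring]
      exact div_self hLne
    have hcomb := hconv.2 (mem_Ici.2 le_rfl) (mem_Ici.2 (by linarith : L ≤ 2 * L)) ha hb hab
    have hpt : ((2 * L - y) / L) • L + ((y - L) / L) • (2 * L) = y := by
      simp only [smul_eq_mul]
      field_simp
      ring
    rw [hpt] at hcomb
    simp only [smul_eq_mul, hFL, hF2Lval, mul_zero, add_zero, zero_add] at hcomb
    exact hcomb
  have hFpos3 : ∀ y ∈ Ici (2 * L), 0 ≤ F y := by
    intro y hy
    rcases eq_or_lt_of_le (mem_Ici.1 hy) with h | h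
    · rw [← h, hF2Lval]
    · have hyL : L < y := by linarith
      have hyLpos : (0:ℝ) < y - L := by linarith
      have ha : (0:ℝ) ≤ (y - 2 * L) / (y - L) := div_nonneg (by linarith) hyLpos.le
      have hb : (0:ℝ) ≤ L / (y - L) := div_nonneg hL.le hyLpos.le
      have hab : (y - 2 * L) / (y - L) + L / (y - L) = 1 := by
        rw [← add_div, show y - 2 * L + L = y - L from by ring]
        exact div_self (by linarith : y - L ≠ 0)
      have hcomb := hconv.2 (mem_Ici.2 le_rfl) (mem_Ici.2 hyL.le) ha hb hab
      have hpt : ((y - 2 * L) / (y - L)) • L + (L / (y - L)) • y = 2 * L := by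
        simp only [smul_eq_mul]
        field_simp
        ring
      rw [hpt, hF2Lval] at hcomb
      simp only [smul_eq_mul, hFL, mul_zero, zero_add] at hcomb
      have hbpos : 0 < L / (y - L) := div_pos hL hyLpos
      have h2 : L / (y - L) * 0 ≤ L / (y - L) * F y := by linarith
      exact le_of_mul_le_mul_left h2 hbpos
  -- monotonicity of G and conclusion
  have hderivG : deriv G = F := funext fun y => (hG' y).deriv
  have hcontG : ∀ s : Set ℝ, ContinuousOn G s :=
    fun s y _ => (hG' y).continuousAt.continuousWithinAt
  have hdiffG : ∀ s : Set ℝ, DifferentiableOn ℝ G s :=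
    fun s y _ => (hG' y).differentiableAt.differentiableWithinAt
  have key : 0 ≤ G x := by
    rcases le_or_gt x 0 with hx | hx
    · have hanti : AntitoneOn G (Iic 0) := by
        apply antitoneOn_of_deriv_nonpos (convex_Iic 0) (hcontG _) (hdiffG _)
        intro y hy
        rw [interior_Iic] at hy
        rw [hderivG]
        exact hFneg0 y (mem_Iic.2 (le_of_lt hy))
      have := hanti (mem_Iic.2 hx) (mem_Iic.2 le_rfl) hx
      rw [hG0] at this
      exact this
    · rcases le_or_gt x L with hxL | hxL
      · have hmono : MonotoneOn G (Icc 0 L) := by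
          apply monotoneOn_of_deriv_nonneg (convex_Icc 0 L) (hcontG _) (hdiffG _)
          intro y hy
          rw [interior_Icc] at hy
          rw [hderivG]
          exact hFpos1 y ⟨hy.1.le, hy.2.le⟩
        have := hmono (mem_Icc.2 ⟨le_rfl, hL.le⟩) (mem_Icc.2 ⟨hx.le, hxL⟩) hx.le
        rw [hG0] at this
        exact this
      · rcases le_or_gt x (2 * L) with hx2L | hx2L
        · have hanti : AntitoneOn G (Icc L (2 * L)) := by
            apply antitoneOn_of_deriv_nonpos (convex_Icc L (2 * L)) (hcontG _) (hdiffG _)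
            intro y hy
            rw [interior_Icc] at hy
            rw [hderivG]
            exact hFneg2 y ⟨hy.1.le, hy.2.le⟩
          have := hanti (mem_Icc.2 ⟨hxL.le, hx2L⟩)
            (mem_Icc.2 ⟨by linarith, le_rfl⟩) hx2L
          rw [hG2L] at this
          exact this
        · have hmono : MonotoneOn G (Ici (2 * L)) := by
            apply monotoneOn_of_deriv_nonneg (convex_Ici (2 * L)) (hcontG _) (hdiffG _)
            intro y hy
            rw [interior_Ici] at hy
            rw [hderivG]
            exact hFpos3 y (mem_Ici.2 (le_of_lt hy))
          have := hmono (mem_Ici.2 le_rfl) (mem_Ici.2 hx2L.le) hx2L.le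
          rw [hG2L] at this
          exact this
  have : Real.log (E x) ≤ c * x ^ 2 + p * x := by
    simp only [hGdef] at key
    linarith
  simpa only [hEdef] using this

lemma kearns_saul_half (p : ℝ) (hp0 : 0 < p) (hp2 : p < 1/2) (l : ℝ) :
    Real.log (p * Real.exp (l * (1 - p)) + (1 - p) * Real.exp (-l * p)) ≤
      l ^ 2 * ((1/2 - p) / Real.log (1/p - 1)) / 2 := by
  set q : ℝ := 1 - p with hqdef
  have hq : 0 < q := by simp only [hqdef]; linarith
  have hpq : p + q = 1 := by simp [hqdef]
  have hqpgt : 1 < q / p := by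
    rw [lt_div_iff₀ hp0]; simp only [hqdef]; linarith
  set L : ℝ := Real.log (q / p) with hLdef
  have hL : 0 < L := Real.log_pos hqpgt
  have hpeL : p * Real.exp L = q := by
    rw [hLdef, Real.exp_log (by positivity)]
    field_simp
  set c : ℝ := (1 - 2 * p) / (4 * L) with hcdef
  have hcL : 4 * L * c = 1 - 2 * p := by
    rw [hcdef]; field_simp
  have hkey := G_nonneg_aux p q L c hp0 hq hpq hL hpeL hcL l
  have hlog1 : Real.log (1/p - 1) = L := by
    rw [hLdef]
    congr 1
    field_simp
    exact hqdef.symm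
  have hLHS : p * Real.exp (l * (1 - p)) + (1 - p) * Real.exp (-l * p) =
      Real.exp (-(l * p)) * (p * Real.exp l + q) := by
    rw [show l * (1 - p) = -(l * p) + l from by ring, Real.exp_add,
      show -l * p = -(l * p) from by ring]
    simp only [hqdef]
    ring
  rw [hLHS, Real.log_mul (Real.exp_ne_zero _) (by positivity), Real.log_exp, hlog1]
  have hRHS : l ^ 2 * ((1/2 - p) / L) / 2 = c * l ^ 2 := by
    rw [hcdef]
    field_simp
    ring
  rw [hRHS]
  linarith

theorem stmt_5 (p : ℝ) (hp0 : 0 < p) (hp1 : p < 1) (hp : p ≠ 1/2) (l : ℝ) :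
    Real.log (p * Real.exp (l * (1 - p)) + (1 - p) * Real.exp (-l * p)) ≤
      l^2 * ((1/2 - p) / Real.log (1/p - 1)) / 2 := by
  rcases lt_or_gt_of_ne hp with h | h
  · exact kearns_saul_half p hp0 h l
  · have h1 : (0:ℝ) < 1 - p := by linarith
    have h2 : 1 - p < 1/2 := by linarith
    have hkey := kearns_saul_half (1 - p) h1 h2 (-l)
    have hLHSeq : (1 - p) * Real.exp (-l * (1 - (1 - p))) + (1 - (1 - p)) * Real.exp (-(-l) * (1 - p)) =
        p * Real.exp (l * (1 - p)) + (1 - p) * Real.exp (-l * p) := by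
      ring_nf
    have hlogeq : (1/2 - (1 - p)) / Real.log (1/(1 - p) - 1) =
        (1/2 - p) / Real.log (1/p - 1) := by
      have e1 : 1/(1 - p) - 1 = p / (1 - p) := by field_simp; ring
      have e2 : 1/p - 1 = (1 - p) / p := by field_simp
      rw [e1, e2, Real.log_div hp0.ne' (by linarith : (1:ℝ) - p ≠ 0),
        Real.log_div (by linarith : (1:ℝ) - p ≠ 0) hp0.ne']
      rw [show (1:ℝ)/2 - (1 - p) = -(1/2 - p) by ring]
      rw [show Real.log p - Real.log (1 - p) = -(Real.log (1 - p) - Real.log p) by ring]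
      rw [neg_div_neg_eq]
    rw [hLHSeq, hlogeq, neg_pow] at hkey
    simpa using hkey
end

section
/- Let p ∈ [1/2, 1). Then for every real λ ≥ 0, log(p·e^{λ(1−p)} + (1−p)·e^{−λp}) ≤ λ²·p(1−p)/2. -/
noncomputable def stmt6F (p x : ℝ) : ℝ :=
  Real.log (p * Real.exp x + (1 - p)) - x * p - x ^ 2 * (p * (1 - p)) / 2

noncomputable def stmt6F' (p x : ℝ) : ℝ :=
  p * Real.exp x / (p * Real.exp x + (1 - p)) - p - x * (p * (1 - p))

lemma stmt6_dpos (p x : ℝ) (hp : 0 < p) (hq : 0 < 1 - p) :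
    0 < p * Real.exp x + (1 - p) := by positivity

lemma stmt6_hasDerivF (p x : ℝ) (hp : 0 < p) (hq : 0 < 1 - p) :
    HasDerivAt (stmt6F p) (stmt6F' p x) x := by
  have hd := stmt6_dpos p x hp hq
  have h1 : HasDerivAt (fun x => p * Real.exp x + (1 - p)) (p * Real.exp x) x :=
    ((Real.hasDerivAt_exp x).const_mul p).add_const (1 - p)
  have h2 := h1.log hd.ne'
  have h3 : HasDerivAt (fun x : ℝ => x * p) p x := by
    simpa using (hasDerivAt_id x).mul_const p
  have h4 : HasDerivAt (fun x : ℝ => x ^ 2 * (p * (1 - p)) / 2) (x * (p * (1 - p))) x := by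
    have := ((hasDerivAt_pow 2 x).mul_const (p * (1 - p))).div_const 2
    convert this using 1
    · rfl
    · rfl
    · norm_num
      ring
  have := (h2.sub h3).sub h4
  exact this

lemma stmt6_hasDerivF' (p x : ℝ) (hp : 0 < p) (hq : 0 < 1 - p) :
    HasDerivAt (stmt6F' p)
      ((p * Real.exp x * (p * Real.exp x + (1 - p)) - p * Real.exp x * (p * Real.exp x)) /
        (p * Real.exp x + (1 - p)) ^ 2 - p * (1 - p)) x := by
  have hd := stmt6_dpos p x hp hq
  have h1 : HasDerivAt (fun x => p * Real.exp x) (p * Real.exp x) x :=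
    (Real.hasDerivAt_exp x).const_mul p
  have h2 : HasDerivAt (fun x => p * Real.exp x + (1 - p)) (p * Real.exp x) x :=
    h1.add_const (1 - p)
  have h3 := h1.div h2 hd.ne'
  have h4 : HasDerivAt (fun x : ℝ => x * (p * (1 - p))) (p * (1 - p)) x := by
    simpa using (hasDerivAt_id x).mul_const (p * (1 - p))
  have := (h3.sub_const p).sub h4
  exact this

lemma stmt6_key (p : ℝ) (hp0 : 1/2 ≤ p) (hp1 : p < 1) (x : ℝ) (hx : 0 ≤ x) :
    Real.log (p * Real.exp x + (1 - p)) ≤ x * p + x ^ 2 * (p * (1 - p)) / 2 := by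
  have hp : 0 < p := by linarith
  have hq : 0 < 1 - p := by linarith
  -- F' is antitone on Ici 0
  have hF'cont : ContinuousOn (stmt6F' p) (Set.Ici 0) := fun y _ =>
    ((stmt6_hasDerivF' p y hp hq).continuousAt).continuousWithinAt
  have hF'anti : AntitoneOn (stmt6F' p) (Set.Ici 0) := by
    apply antitoneOn_of_deriv_nonpos (convex_Ici 0) hF'cont
      (fun y hy => ((stmt6_hasDerivF' p y hp hq).differentiableAt).differentiableWithinAt)
    intro y hy
    rw [(stmt6_hasDerivF' p y hp hq).deriv]
    have hyi : (0:ℝ) < y := by simpa using hy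
    have hu : 1 ≤ Real.exp y := Real.one_le_exp hyi.le
    have hd := stmt6_dpos p y hp hq
    rw [sub_nonpos, div_le_iff₀ (by positivity)]
    have h1 : (1 - p) ^ 2 ≤ p ^ 2 * Real.exp y := by nlinarith
    have h2 : 0 ≤ (p ^ 2 * Real.exp y - (1 - p) ^ 2) * (Real.exp y - 1) :=
      mul_nonneg (by linarith) (by linarith)
    nlinarith [mul_nonneg (mul_pos hp hq).le h2]
  have hF'0 : stmt6F' p 0 = 0 := by
    simp [stmt6F']
  have hF'le : ∀ y ∈ Set.Ici (0:ℝ), stmt6F' p y ≤ 0 := by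
    intro y hy
    have := hF'anti (Set.self_mem_Ici) hy (by exact hy)
    rw [hF'0] at this; exact this
  have hFcont : ContinuousOn (stmt6F p) (Set.Ici 0) := fun y _ =>
    ((stmt6_hasDerivF p y hp hq).continuousAt).continuousWithinAt
  have hFanti : AntitoneOn (stmt6F p) (Set.Ici 0) := by
    apply antitoneOn_of_deriv_nonpos (convex_Ici 0) hFcont
      (fun y hy => ((stmt6_hasDerivF p y hp hq).differentiableAt).differentiableWithinAt)
    intro y hy
    rw [(stmt6_hasDerivF p y hp hq).deriv]
    exact hF'le y (interior_subset hy)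
  have hF0 : stmt6F p 0 = 0 := by
    simp [stmt6F]
  have := hFanti (Set.self_mem_Ici) hx hx
  rw [hF0] at this
  have : stmt6F p x ≤ 0 := this
  unfold stmt6F at this
  linarith

theorem stmt_6 (p : ℝ) (hp0 : 1/2 ≤ p) (hp1 : p < 1) (l : ℝ) (hl : 0 ≤ l) :
    Real.log (p * Real.exp (l * (1 - p)) + (1 - p) * Real.exp (-l * p)) ≤
      l^2 * (p * (1 - p)) / 2 := by
  have hp : 0 < p := by linarith
  have hq : 0 < 1 - p := by linarith
  have hd := stmt6_dpos p l hp hq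
  have hrw : p * Real.exp (l * (1 - p)) + (1 - p) * Real.exp (-l * p)
      = Real.exp (-(l * p)) * (p * Real.exp l + (1 - p)) := by
    rw [show l * (1 - p) = l + -(l * p) by ring, Real.exp_add,
      show -l * p = -(l * p) by ring]
    ring
  rw [hrw, Real.log_mul (Real.exp_ne_zero _) hd.ne', Real.log_exp]
  have := stmt6_key p hp0 hp1 l hl
  linarith
end

section
/- For any sequence of real numbers z_1, …, z_n with 0 ≤ z_k ≤ Z_{k−1}, where Z_k := max(1, ∑_{i=1}^{k} z_i), it holds that ∑_{k=1}^{n} z_k/Z_{k−1} ≤ 2·log(Z_n) + 1. -/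
lemma aux_le_two_log (t : ℝ) (h1 : 1 ≤ t) (h2 : t ≤ 2) : t ≤ 2 * Real.log t + 1 := by
  have ht : 0 < t := by linarith
  have h := Real.one_sub_inv_le_log_of_pos ht
  have hinv : t * t⁻¹ = 1 := mul_inv_cancel₀ ht.ne'
  nlinarith [h, hinv]

theorem stmt_8 (n : ℕ) (z : ℕ → ℝ)
    (Z : ℕ → ℝ) (hZ : ∀ k, Z k = max 1 (∑ i ∈ Finset.Icc 1 k, z i))
    (hz : ∀ k ∈ Finset.Icc 1 n, 0 ≤ z k ∧ z k ≤ Z (k - 1)) :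
    ∑ k ∈ Finset.Icc 1 n, z k / Z (k - 1) ≤ 2 * Real.log (Z n) + 1 := by
  have key : ∀ m, (∀ k ∈ Finset.Icc 1 m, 0 ≤ z k ∧ z k ≤ Z (k - 1)) →
      ∑ k ∈ Finset.Icc 1 m, z k / Z (k - 1) ≤
        2 * Real.log (Z m) + min (∑ i ∈ Finset.Icc 1 m, z i) 1 := by
    intro m
    induction m with
    | zero => intro _; simp [hZ]
    | succ n ih =>
      intro hzm
      have hz' : ∀ k ∈ Finset.Icc 1 n, 0 ≤ z k ∧ z k ≤ Z (k - 1) := by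
        intro k hk
        refine hzm k ?_
        simp only [Finset.mem_Icc] at hk ⊢
        omega
      have IH := ih hz'
      have hmem : n + 1 ∈ Finset.Icc 1 (n + 1) := by
        simp only [Finset.mem_Icc]; omega
      obtain ⟨hz1, hz2⟩ := hzm (n + 1) hmem
      have hsub : n + 1 - 1 = n := rfl
      rw [hsub] at hz2
      set S : ℝ := ∑ i ∈ Finset.Icc 1 n, z i with hS
      have hSnn : 0 ≤ S := Finset.sum_nonneg fun i hi => (hz' i hi).1
      have hsum1 : ∑ k ∈ Finset.Icc 1 (n + 1), z k / Z (k - 1) =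
          (∑ k ∈ Finset.Icc 1 n, z k / Z (k - 1)) + z (n + 1) / Z n := by
        rw [Finset.sum_Icc_succ_top (by omega : 1 ≤ n + 1)]
        rfl
      have hsum2 : ∑ i ∈ Finset.Icc 1 (n + 1), z i = S + z (n + 1) := by
        rw [Finset.sum_Icc_succ_top (by omega : 1 ≤ n + 1)]
      have hZn : Z n = max 1 S := hZ n
      have hZn1 : Z (n + 1) = max 1 (S + z (n + 1)) := by rw [hZ (n + 1), hsum2]
      rw [hsum1, hsum2, hZn1]
      rcases le_or_gt 1 S with hc | hc
      · -- S ≥ 1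
        have hSpos : 0 < S := lt_of_lt_of_le one_pos hc
        have hZnS : Z n = S := by rw [hZn, max_eq_right hc]
        have hmax1 : max 1 (S + z (n + 1)) = S + z (n + 1) :=
          max_eq_right (by linarith)
        rw [hZnS] at hz2
        have ht1 : 1 ≤ (S + z (n + 1)) / S := by
          rw [le_div_iff₀ hSpos]; linarith
        have ht2 : (S + z (n + 1)) / S ≤ 2 := by
          rw [div_le_iff₀ hSpos]; linarith
        have haux := aux_le_two_log _ ht1 ht2
        rw [Real.log_div (by positivity) hSpos.ne'] at haux
        have hdiv : (S + z (n + 1)) / S = 1 + z (n + 1) / S := by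
          field_simp
        rw [hdiv] at haux
        have hmin1 : min S 1 = 1 := min_eq_right hc
        have hmin2 : min (S + z (n + 1)) 1 = 1 := min_eq_right (by linarith)
        rw [hmax1, hmin2]
        rw [hZnS, hmin1] at IH
        have hzd : z (n + 1) / Z n = z (n + 1) / S := by rw [hZnS]
        rw [hzd]
        linarith
      · -- S < 1
        have hZn1' : Z n = 1 := by rw [hZn, max_eq_left hc.le]
        rw [hZn1'] at hz2
        have hminS : min S 1 = S := min_eq_left hc.le
        rw [hZn1', hminS] at IH
        rcases le_or_gt (S + z (n + 1)) 1 with hc2 | hc2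
        · have hmax1 : max 1 (S + z (n + 1)) = 1 := max_eq_left hc2
          have hmin2 : min (S + z (n + 1)) 1 = S + z (n + 1) := min_eq_left hc2
          rw [hmax1, hmin2, Real.log_one]
          have : z (n + 1) / Z n = z (n + 1) := by rw [hZn1', div_one]
          rw [this]
          simp only [Real.log_one, mul_zero, zero_add] at IH ⊢
          linarith
        · have hmax1 : max 1 (S + z (n + 1)) = S + z (n + 1) :=
            max_eq_right hc2.le
          have hmin2 : min (S + z (n + 1)) 1 = 1 := min_eq_right hc2.le
          rw [hmax1, hmin2]
          have haux := aux_le_two_log (S + z (n + 1)) hc2.le (by linarith)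
          have : z (n + 1) / Z n = z (n + 1) := by rw [hZn1', div_one]
          rw [this]
          simp only [Real.log_one, mul_zero, zero_add] at IH
          linarith
  have hkey := key n hz
  have hZpos : 1 ≤ Z n := by rw [hZ n]; exact le_max_left _ _
  have hlog : 0 ≤ Real.log (Z n) := Real.log_nonneg hZpos
  have hmin : min (∑ i ∈ Finset.Icc 1 n, z i) 1 ≤ 1 := min_le_right _ _
  linarith
end

section
/- Let (X_t)_{t≥1} be a martingale difference sequence with a ≤ X_t ≤ b almost surely for real constants a < b. Then for all δ ∈ (0,1), P(∃ T ∈ ℕ : ∑_{t=1}^{T} X_t ≥ (b−a)·√((T+1)/2 · log(√(T+1)/δ))) ≤ δ. -/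
open MeasureTheory

section AUX

open Real

/-- Core of Hoeffding's lemma : log(1-p+p e^u) ≤ p u + u²/8. -/
lemma hoeff_core (p : ℝ) (hp0 : 0 ≤ p) (hp1 : p ≤ 1) (u : ℝ) :
    Real.log (1 - p + p * Real.exp u) ≤ p * u + u ^ 2 / 8 := by
  -- D v := 1 - p + p * exp v > 0
  have hD : ∀ v : ℝ, 0 < 1 - p + p * Real.exp v := by
    intro v
    rcases lt_or_eq_of_le hp1 with h | h
    · have := mul_nonneg hp0 (Real.exp_nonneg v); linarith
    · subst h; simpa using Real.exp_pos v
  set f : ℝ → ℝ := fun v => Real.log (1 - p + p * Real.exp v) - p * v - v ^ 2 / 8 with hf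
  have hderiv : ∀ v : ℝ, HasDerivAt f
      (p * Real.exp v / (1 - p + p * Real.exp v) - p - v / 4) v := by
    intro v
    have h1 : HasDerivAt (fun w : ℝ => 1 - p + p * Real.exp w) (p * Real.exp v) v := by
      simpa using ((Real.hasDerivAt_exp v).const_mul p).const_add (1 - p)
    have h2 : HasDerivAt (fun w : ℝ => Real.log (1 - p + p * Real.exp w))
        (p * Real.exp v / (1 - p + p * Real.exp v)) v := h1.log (hD v).ne'
    have h3 : HasDerivAt (fun w : ℝ => p * w) p v := by
      simpa using (hasDerivAt_id v).const_mul p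
    have h4 : HasDerivAt (fun w : ℝ => w ^ 2 / 8) (v / 4) v := by
      have := (hasDerivAt_pow 2 v).div_const 8
      simpa [pow_one] using this.congr_deriv (by ring)
    exact (h2.sub h3).sub h4
  set g : ℝ → ℝ := fun v => p * Real.exp v / (1 - p + p * Real.exp v) - p - v / 4 with hg
  have hgderiv : ∀ v : ℝ, HasDerivAt g
      ((p * Real.exp v * (1 - p + p * Real.exp v) - p * Real.exp v * (p * Real.exp v)) /
        (1 - p + p * Real.exp v) ^ 2 - 1 / 4) v := by
    intro v
    have h1 : HasDerivAt (fun w : ℝ => p * Real.exp w) (p * Real.exp v) v :=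
      (Real.hasDerivAt_exp v).const_mul p
    have h2 : HasDerivAt (fun w : ℝ => 1 - p + p * Real.exp w) (p * Real.exp v) v := by
      simpa using ((Real.hasDerivAt_exp v).const_mul p).const_add (1 - p)
    have h3 := h1.div h2 (hD v).ne'
    have h4 : HasDerivAt (fun w : ℝ => p + w / 4) (1 / 4) v := by
      simpa using ((hasDerivAt_id v).div_const 4).const_add p
    have := h3.sub h4
    refine this.congr_of_eventuallyEq (Filter.Eventually.of_forall fun w => ?_)
    simp only [hg, Pi.sub_apply, Pi.div_apply]; ring
  have hgderiv_nonpos : ∀ v : ℝ,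
      (p * Real.exp v * (1 - p + p * Real.exp v) - p * Real.exp v * (p * Real.exp v)) /
        (1 - p + p * Real.exp v) ^ 2 - 1 / 4 ≤ 0 := by
    intro v
    have hDv := hD v
    rw [sub_nonpos, div_le_iff₀ (by positivity)]
    nlinarith [sq_nonneg (1 - p + p * Real.exp v - 2 * (p * Real.exp v))]
  have hganti : Antitone g := by
    have hdiff : Differentiable ℝ g := fun v => (hgderiv v).differentiableAt
    refine antitone_of_deriv_nonpos hdiff ?_
    intro v
    rw [(hgderiv v).deriv]
    exact hgderiv_nonpos v
  have hg0 : g 0 = 0 := by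
    simp [hg]
  have hf0 : f 0 = 0 := by simp [hf]
  -- conclude f u ≤ 0
  have key : f u ≤ 0 := by
    rcases le_total u 0 with hu | hu
    · -- f monotone on Iic 0
      have hmono : MonotoneOn f (Set.Iic (0:ℝ)) := by
        refine monotoneOn_of_deriv_nonneg (convex_Iic 0)
          ((Differentiable.continuous (fun v => (hderiv v).differentiableAt)).continuousOn) ?_ ?_
        · intro v hv; exact ((hderiv v).differentiableAt).differentiableWithinAt
        · intro v hv
          rw [(hderiv v).deriv]
          have : g 0 ≤ g v := hganti (le_of_lt (by simpa using hv))
          rw [hg0] at this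
          simpa [hg] using this
      have := hmono (Set.mem_Iic.2 hu) (Set.mem_Iic.2 le_rfl) hu
      simpa [hf0] using this
    · have hmono : AntitoneOn f (Set.Ici (0:ℝ)) := by
        refine antitoneOn_of_deriv_nonpos (convex_Ici 0)
          ((Differentiable.continuous (fun v => (hderiv v).differentiableAt)).continuousOn) ?_ ?_
        · intro v hv; exact ((hderiv v).differentiableAt).differentiableWithinAt
        · intro v hv
          have : g v ≤ g 0 := hganti (le_of_lt (by simpa using hv))
          rw [hg0] at this
          rw [(hderiv v).deriv]
          simpa [hg] using this
      have := hmono (Set.mem_Ici.2 le_rfl) (Set.mem_Ici.2 hu) hu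
      simpa [hf0] using this
  have : Real.log (1 - p + p * Real.exp u) - p * u - u ^ 2 / 8 ≤ 0 := key
  linarith

/-- Hoeffding's lemma, MGF form for the linear upper bound. -/
lemma hoeff_mgf (a b h : ℝ) (ha : a ≤ 0) (hb : 0 ≤ b) (hab : a < b) :
    (b * Real.exp (h * a) - a * Real.exp (h * b)) / (b - a) ≤
      Real.exp (h ^ 2 * (b - a) ^ 2 / 8) := by
  have hba : (0:ℝ) < b - a := by linarith
  set p : ℝ := -a / (b - a) with hp
  have hp0 : 0 ≤ p := div_nonneg (by linarith) hba.le
  have hp1 : p ≤ 1 := by rw [hp, div_le_one hba]; linarith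
  have hrw : (b * Real.exp (h * a) - a * Real.exp (h * b)) / (b - a) =
      Real.exp (h * a) * (1 - p + p * Real.exp (h * (b - a))) := by
    rw [hp]
    have : Real.exp (h * b) = Real.exp (h * a) * Real.exp (h * (b - a)) := by
      rw [← Real.exp_add]; ring_nf
    rw [this]
    field_simp
    ring
  have hDpos : 0 < 1 - p + p * Real.exp (h * (b - a)) := by
    rcases lt_or_eq_of_le hp1 with h' | h'
    · have := mul_nonneg hp0 (Real.exp_nonneg (h * (b - a))); linarith
    · rw [← h']
      have := Real.exp_pos (h * (b - a)); nlinarith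
  rw [hrw, ← Real.exp_log hDpos, ← Real.exp_add]
  apply Real.exp_le_exp.2
  have := hoeff_core p hp0 hp1 (h * (b - a))
  have hpu : p * (h * (b - a)) = -a * h := by
    rw [hp]; field_simp
  nlinarith [this]

open Real MeasureTheory

lemma gauss_lin (c s : ℝ) (hc : 0 < c) :
    ∫ x : ℝ, Real.exp (s * x - c / 2 * x ^ 2) =
      Real.sqrt (2 * Real.pi / c) * Real.exp (s ^ 2 / (2 * c)) := by
  have h1 : ∀ x : ℝ, Real.exp (s * x - c / 2 * x ^ 2) =
      Real.exp (s ^ 2 / (2 * c)) * Real.exp (-(c / 2) * (x - s / c) ^ 2) := by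
    intro x
    rw [← Real.exp_add]
    congr 1
    field_simp
    ring
  simp_rw [h1]
  rw [MeasureTheory.integral_const_mul]
  have h2 : ∫ x : ℝ, Real.exp (-(c / 2) * (x - s / c) ^ 2) =
      ∫ x : ℝ, Real.exp (-(c / 2) * x ^ 2) :=
    integral_sub_right_eq_self (fun y => Real.exp (-(c / 2) * y ^ 2)) (s / c)
  rw [h2, integral_gaussian]
  rw [show Real.pi / (c / 2) = 2 * Real.pi / c by ring]
  ring

lemma integrable_gauss_lin (c s : ℝ) (hc : 0 < c) :
    MeasureTheory.Integrable (fun x : ℝ => Real.exp (s * x - c / 2 * x ^ 2)) := by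
  have h1 : ∀ x : ℝ, Real.exp (s * x - c / 2 * x ^ 2) =
      Real.exp (s ^ 2 / (2 * c)) * Real.exp (-(c / 2) * (x - s / c) ^ 2) := by
    intro x
    rw [← Real.exp_add]
    congr 1
    field_simp
    ring
  simp_rw [h1]
  apply MeasureTheory.Integrable.const_mul
  have h2 : MeasureTheory.Integrable (fun x : ℝ => Real.exp (-(c / 2) * x ^ 2)) :=
    integrable_exp_neg_mul_sq (by positivity)
  exact h2.comp_sub_right (s / c)

end AUX

theorem stmt_14 {Ω : Type*} {m0 : MeasurableSpace Ω} (P : Measure Ω) [IsProbabilityMeasure P]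
    (𝒢 : Filtration ℕ m0) (X : ℕ → Ω → ℝ) (a b : ℝ) (hab : a < b)
    (hadapted : Adapted 𝒢 X)
    (hint : ∀ t, Integrable (X t) P)
    (hmds : ∀ t : ℕ, 1 ≤ t → P[X t | 𝒢 (t - 1)] =ᵐ[P] 0)
    (hbdd : ∀ t : ℕ, ∀ᵐ ω ∂P, a ≤ X t ω ∧ X t ω ≤ b)
    (δ : ℝ) (hδ0 : 0 < δ) (hδ1 : δ < 1) :
    P {ω | ∃ T : ℕ, 1 ≤ T ∧
        ∑ t ∈ Finset.Icc 1 T, X t ω ≥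
          (b - a) * Real.sqrt ((T + 1) / 2 * Real.log (Real.sqrt (T + 1) / δ))} ≤
      ENNReal.ofReal δ := by
  classical
  have hba : (0:ℝ) < b - a := sub_pos.2 hab
  set c2 : ℝ := (b - a) ^ 2 / 4 with hc2def
  have hc2 : 0 < c2 := by positivity
  set Z : ℝ := Real.sqrt (2 * Real.pi / c2) with hZdef
  have hZ : 0 < Z := Real.sqrt_pos.2 (by positivity)
  set S : ℕ → Ω → ℝ := fun n ω => ∑ t ∈ Finset.Icc 1 n, X t ω with hSdef
  set N : ℕ → Ω → ℝ := fun n ω =>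
    Real.sqrt (2 * Real.pi / (c2 * (n + 1))) *
      Real.exp (S n ω ^ 2 / (2 * (c2 * (n + 1)))) with hNdef
  -- basic measurability
  have hSsm : ∀ n, StronglyMeasurable[𝒢 n] (S n) := by
    intro n
    apply Measurable.stronglyMeasurable
    apply Finset.measurable_fun_sum
    intro t ht
    exact (hadapted t).mono (𝒢.mono (Finset.mem_Icc.1 ht).2) le_rfl
  have hSm : ∀ n, Measurable (S n) := fun n => ((hSsm n).mono (𝒢.le n)).measurable
  have hNsm : ∀ n, StronglyMeasurable[𝒢 n] (N n) := by
    intro n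
    have hcont : Continuous fun x : ℝ => Real.sqrt (2 * Real.pi / (c2 * (n + 1))) *
        Real.exp (x ^ 2 / (2 * (c2 * (n + 1)))) := by fun_prop
    exact hcont.comp_stronglyMeasurable (hSsm n)
  have hNm : ∀ n, Measurable (N n) := fun n => ((hNsm n).mono (𝒢.le n)).measurable
  have hNpos : ∀ n ω, 0 < N n ω := by
    intro n ω
    have h1 : (0:ℝ) < 2 * Real.pi / (c2 * (n + 1)) := by positivity
    exact mul_pos (Real.sqrt_pos.2 h1) (Real.exp_pos _)
  -- a ≤ 0 ≤ b
  have ha0 : a ≤ 0 ∧ 0 ≤ b := by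
    have hX1 : ∫ ω, X 1 ω ∂P = 0 := by
      have h := hmds 1 le_rfl
      have h2 := integral_condExp (𝒢.le 0) (μ := P) (f := X 1)
      rw [← h2]
      rw [integral_congr_ae h]
      simp
    have hlb : a ≤ ∫ ω, X 1 ω ∂P := by
      have : ∫ (_ : Ω), a ∂P ≤ ∫ ω, X 1 ω ∂P := by
        refine integral_mono_ae (integrable_const a) (hint 1) ?_
        filter_upwards [hbdd 1] with ω hω using hω.1
      simpa using this
    have hub : ∫ ω, X 1 ω ∂P ≤ b := by
      have : ∫ ω, X 1 ω ∂P ≤ ∫ (_ : Ω), b ∂P := by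
        refine integral_mono_ae (hint 1) (integrable_const b) ?_
        filter_upwards [hbdd 1] with ω hω using hω.2
      simpa using this
    rw [hX1] at hlb hub
    exact ⟨hlb, hub⟩
  -- a.e. bound on S
  set Kc : ℝ := |a| ⊔ |b| with hKcdef
  have hbdd' : ∀ᵐ ω ∂P, ∀ t, a ≤ X t ω ∧ X t ω ≤ b := ae_all_iff.2 hbdd
  have hKc : 0 ≤ Kc := le_trans (abs_nonneg a) le_sup_left
  have hXbd : ∀ᵐ ω ∂P, ∀ t, |X t ω| ≤ Kc := by
    filter_upwards [hbdd'] with ω hω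
    intro t
    refine abs_le.2 ⟨?_, ?_⟩
    · have : -|a| ≤ a := neg_abs_le a
      have h2 : |a| ≤ Kc := le_sup_left
      linarith [(hω t).1]
    · have : b ≤ |b| := le_abs_self b
      have h2 : |b| ≤ Kc := le_sup_right
      linarith [(hω t).2]
  have hSbd : ∀ n, ∀ᵐ ω ∂P, |S n ω| ≤ n * Kc := by
    intro n
    filter_upwards [hXbd] with ω hω
    calc |S n ω| ≤ ∑ t ∈ Finset.Icc 1 n, |X t ω| := Finset.abs_sum_le_sum_abs _ _
      _ ≤ ∑ _t ∈ Finset.Icc 1 n, Kc := Finset.sum_le_sum fun t _ => hω t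
      _ = n * Kc := by
          rw [Finset.sum_const, Nat.card_Icc]
          simp [nsmul_eq_mul]
  -- integral representation of N
  have hrep : ∀ n ω, N n ω =
      ∫ x : ℝ, Real.exp (S n ω * x - c2 * (n + 1) / 2 * x ^ 2) := by
    intro n ω
    rw [gauss_lin (c2 * (n + 1)) (S n ω) (by positivity)]
  have hXmeas : ∀ t, Measurable (X t) := fun t =>
    (hadapted t).mono (𝒢.le t) le_rfl
  have hexp_meas : ∀ (lam : ℝ) (m : ℕ), Measurable fun ω => Real.exp (lam * S m ω) :=
    fun lam m => Real.measurable_exp.comp ((hSm m).const_mul lam)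
  have hexpbd : ∀ (lam : ℝ) (m : ℕ), ∀ᵐ ω ∂P,
      ‖Real.exp (lam * S m ω)‖ ≤ Real.exp (|lam| * (m * Kc)) := by
    intro lam m
    filter_upwards [hSbd m] with ω hω
    rw [Real.norm_eq_abs, abs_of_pos (Real.exp_pos _)]
    apply Real.exp_le_exp.2
    calc lam * S m ω ≤ |lam * S m ω| := le_abs_self _
      _ = |lam| * |S m ω| := abs_mul _ _
      _ ≤ |lam| * (m * Kc) := mul_le_mul_of_nonneg_left hω (abs_nonneg _)
  have hint_exp : ∀ (lam : ℝ) (m : ℕ), Integrable (fun ω => Real.exp (lam * S m ω)) P :=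
    fun lam m => (integrable_const _).mono' (hexp_meas lam m).aestronglyMeasurable (hexpbd lam m)
  -- per-λ conditional Hoeffding bound in set-integral form
  have hB : ∀ (n : ℕ) (lam : ℝ) (A : Set Ω), MeasurableSet[𝒢 n] A →
      ∫ ω in A, Real.exp (lam * S (n + 1) ω) ∂P ≤
        Real.exp (lam ^ 2 * c2 / 2) * ∫ ω in A, Real.exp (lam * S n ω) ∂P := by
    intro n lam A hA
    have hAm : MeasurableSet A := 𝒢.le n A hA
    have hSsucc : ∀ ω, S (n + 1) ω = S n ω + X (n + 1) ω := by
      intro ω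
      simp only [hSdef]
      exact Finset.sum_Icc_succ_top (by omega) _
    have hint_expX : Integrable (fun ω => Real.exp (lam * S n ω) * X (n + 1) ω) P := by
      refine (integrable_const (Real.exp (|lam| * (n * Kc)) * Kc)).mono'
        ((hexp_meas lam n).mul (hXmeas (n + 1))).aestronglyMeasurable ?_
      filter_upwards [hexpbd lam n, hXbd] with ω h1 h2
      rw [norm_mul]
      exact mul_le_mul h1 (h2 (n + 1)) (norm_nonneg _)
        (le_trans (norm_nonneg _) h1)
    -- the zero-mean weighted integral
    have hzero : ∫ ω in A, Real.exp (lam * S n ω) * X (n + 1) ω ∂P = 0 := by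
      set f : Ω → ℝ := A.indicator fun ω => Real.exp (lam * S n ω) with hfdef
      have hfSM : StronglyMeasurable[𝒢 n] f := by
        refine StronglyMeasurable.indicator ?_ hA
        exact (Real.continuous_exp.comp (continuous_const.mul continuous_id)).comp_stronglyMeasurable (hSsm n)
      have hfbd : ∀ᵐ ω ∂P, ‖f ω‖ ≤ Real.exp (|lam| * (n * Kc)) := by
        filter_upwards [hexpbd lam n] with ω hω
        simp only [hfdef]
        by_cases h : ω ∈ A
        · simpa [Set.indicator_of_mem h] using hω
        · simp [Set.indicator_of_notMem h]
          positivity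
      have hpull := condExp_stronglyMeasurable_mul_of_bound (𝒢.le n) hfSM
        (hint (n + 1)) _ hfbd
      have h0 : P[X (n + 1) | 𝒢 n] =ᵐ[P] 0 := by
        simpa using hmds (n + 1) (by omega)
      have hfX : Integrable (f * X (n + 1)) P := by
        refine (integrable_const (Real.exp (|lam| * (n * Kc)) * Kc)).mono'
          ((hfSM.mono (𝒢.le n)).aestronglyMeasurable.mul
            (hXmeas (n + 1)).aestronglyMeasurable) ?_
        filter_upwards [hfbd, hXbd] with ω h1 h2
        rw [Pi.mul_apply, norm_mul]
        exact mul_le_mul h1 (h2 (n + 1)) (norm_nonneg _)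
          (le_trans (norm_nonneg _) h1)
      have key : ∫ ω, (f * X (n + 1)) ω ∂P = 0 := by
        rw [← integral_condExp (𝒢.le n)]
        have : P[f * X (n + 1) | 𝒢 n] =ᵐ[P] 0 := by
          refine hpull.trans ?_
          filter_upwards [h0] with ω hω
          simp [hω]
        rw [integral_congr_ae this]
        simp
      rw [← integral_indicator hAm]
      rw [← key]
      congr 1
      funext ω
      simp only [hfdef, Pi.mul_apply]
      by_cases h : ω ∈ A <;> simp [Set.indicator_of_mem, Set.indicator_of_notMem, h]
    -- pointwise convexity bound
    set c1 : ℝ := (b * Real.exp (lam * a) - a * Real.exp (lam * b)) / (b - a) with hc1def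
    set c3 : ℝ := (Real.exp (lam * b) - Real.exp (lam * a)) / (b - a) with hc3def
    have hconv : ∀ᵐ ω ∂P, Real.exp (lam * S (n + 1) ω) ≤
        c1 * Real.exp (lam * S n ω) +
          c3 * (Real.exp (lam * S n ω) * X (n + 1) ω) := by
      filter_upwards [hbdd (n + 1)] with ω hω
      have hx := hω
      set x : ℝ := X (n + 1) ω with hxdef
      have hcomb : Real.exp (lam * x) ≤
          (b - x) / (b - a) * Real.exp (lam * a) + (x - a) / (b - a) * Real.exp (lam * b) := by
        have hμ : 0 ≤ (b - x) / (b - a) := div_nonneg (by linarith [hx.2]) hba.le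
        have hν : 0 ≤ (x - a) / (b - a) := div_nonneg (by linarith [hx.1]) hba.le
        have hsum : (b - x) / (b - a) + (x - a) / (b - a) = 1 := by
          field_simp
          ring
        have := convexOn_exp.2 (Set.mem_univ (lam * a)) (Set.mem_univ (lam * b)) hμ hν hsum
        have harg : (b - x) / (b - a) * (lam * a) + (x - a) / (b - a) * (lam * b) = lam * x := by
          field_simp
          ring
        simp only [smul_eq_mul] at this
        rw [harg] at this
        exact this
      have hSx : lam * S (n + 1) ω = lam * S n ω + lam * x := by
        rw [hSsucc ω]; ring
      rw [hSx, Real.exp_add]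
      have hpos : 0 ≤ Real.exp (lam * S n ω) := (Real.exp_pos _).le
      calc Real.exp (lam * S n ω) * Real.exp (lam * x) ≤
          Real.exp (lam * S n ω) *
            ((b - x) / (b - a) * Real.exp (lam * a) + (x - a) / (b - a) * Real.exp (lam * b)) :=
            mul_le_mul_of_nonneg_left hcomb hpos
        _ = c1 * Real.exp (lam * S n ω) + c3 * (Real.exp (lam * S n ω) * x) := by
            simp only [hc1def, hc3def]
            field_simp
            ring
    -- integrate the convexity bound over A
    have hRHSint : Integrable (fun ω => c1 * Real.exp (lam * S n ω) +
        c3 * (Real.exp (lam * S n ω) * X (n + 1) ω)) P :=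
      ((hint_exp lam n).const_mul c1).add (hint_expX.const_mul c3)
    have hmono1 : ∫ ω in A, Real.exp (lam * S (n + 1) ω) ∂P ≤
        ∫ ω in A, (c1 * Real.exp (lam * S n ω) +
          c3 * (Real.exp (lam * S n ω) * X (n + 1) ω)) ∂P :=
      integral_mono_ae ((hint_exp lam (n + 1)).restrict)
        (hRHSint.restrict) (ae_restrict_of_ae hconv)
    have hsplit : ∫ ω in A, (c1 * Real.exp (lam * S n ω) +
          c3 * (Real.exp (lam * S n ω) * X (n + 1) ω)) ∂P =
        c1 * ∫ ω in A, Real.exp (lam * S n ω) ∂P := by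
      rw [integral_add (((hint_exp lam n).const_mul c1).restrict)
        ((hint_expX.const_mul c3).restrict), MeasureTheory.integral_const_mul,
        MeasureTheory.integral_const_mul, hzero]
      ring
    have hc1le : c1 ≤ Real.exp (lam ^ 2 * c2 / 2) := by
      rw [hc1def]
      have heq : lam ^ 2 * c2 / 2 = lam ^ 2 * (b - a) ^ 2 / 8 := by rw [hc2def]; ring
      rw [heq]
      exact hoeff_mgf a b lam ha0.1 ha0.2 hab
    have hintpos : 0 ≤ ∫ ω in A, Real.exp (lam * S n ω) ∂P :=
      setIntegral_nonneg hAm fun ω _ => (Real.exp_pos _).le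
    calc ∫ ω in A, Real.exp (lam * S (n + 1) ω) ∂P ≤
        c1 * ∫ ω in A, Real.exp (lam * S n ω) ∂P := by rw [← hsplit]; exact hmono1
      _ ≤ Real.exp (lam ^ 2 * c2 / 2) * ∫ ω in A, Real.exp (lam * S n ω) ∂P :=
          mul_le_mul_of_nonneg_right hc1le hintpos
  -- supermartingale property in lintegral form
  have hstep : ∀ (n : ℕ) (A : Set Ω), MeasurableSet[𝒢 n] A →
      ∫⁻ ω in A, ENNReal.ofReal (N (n + 1) ω) ∂P ≤
        ∫⁻ ω in A, ENNReal.ofReal (N n ω) ∂P := by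
    intro n A hA
    have hAm : MeasurableSet A := 𝒢.le n A hA
    have hGmeas : ∀ (m : ℕ) (c : ℝ),
        Measurable fun p : Ω × ℝ =>
          ENNReal.ofReal (Real.exp (S m p.1 * p.2 - c * p.2 ^ 2)) := by
      intro m c
      apply Measurable.ennreal_ofReal
      apply Real.measurable_exp.comp
      exact (((hSm m).comp measurable_fst).mul measurable_snd).sub
        ((measurable_snd.pow_const 2).const_mul c)
    have hrepL : ∀ (m : ℕ) (ω : Ω), ENNReal.ofReal (N m ω) =
        ∫⁻ x : ℝ, ENNReal.ofReal (Real.exp (S m ω * x - c2 * (m + 1) / 2 * x ^ 2)) := by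
      intro m ω
      rw [hrep m ω]
      rw [ofReal_integral_eq_lintegral_ofReal
        (integrable_gauss_lin (c2 * (m + 1)) (S m ω) (by positivity))
        (Filter.Eventually.of_forall fun x => (Real.exp_pos _).le)]
    have hsplit : ∀ (m : ℕ) (d : ℝ) (x : ℝ),
        ∫⁻ ω in A, ENNReal.ofReal (Real.exp (S m ω * x - d * x ^ 2)) ∂P =
          ENNReal.ofReal (Real.exp (-(d * x ^ 2))) *
            ∫⁻ ω in A, ENNReal.ofReal (Real.exp (x * S m ω)) ∂P := by
      intro m d x
      rw [← lintegral_const_mul' _ _ ENNReal.ofReal_ne_top]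
      apply lintegral_congr
      intro ω
      rw [← ENNReal.ofReal_mul (Real.exp_pos _).le, ← Real.exp_add]
      congr 2
      ring
    have hconv : ∀ (m : ℕ) (x : ℝ),
        ∫⁻ ω in A, ENNReal.ofReal (Real.exp (x * S m ω)) ∂P =
          ENNReal.ofReal (∫ ω in A, Real.exp (x * S m ω) ∂P) :=
      fun m x => (ofReal_integral_eq_lintegral_ofReal ((hint_exp x m).restrict)
        (Filter.Eventually.of_forall fun ω => (Real.exp_pos _).le)).symm
    have hperx : ∀ x : ℝ,
        ∫⁻ ω in A, ENNReal.ofReal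
            (Real.exp (S (n + 1) ω * x - c2 * (↑(n + 1) + 1) / 2 * x ^ 2)) ∂P ≤
          ∫⁻ ω in A, ENNReal.ofReal
            (Real.exp (S n ω * x - c2 * (↑n + 1) / 2 * x ^ 2)) ∂P := by
      intro x
      rw [hsplit (n + 1) _ x, hsplit n _ x]
      have hb := hB n x A hA
      have hlin : ∫⁻ ω in A, ENNReal.ofReal (Real.exp (x * S (n + 1) ω)) ∂P ≤
          ENNReal.ofReal (Real.exp (x ^ 2 * c2 / 2)) *
            ∫⁻ ω in A, ENNReal.ofReal (Real.exp (x * S n ω)) ∂P := by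
        rw [hconv (n + 1) x, hconv n x, ← ENNReal.ofReal_mul (Real.exp_pos _).le]
        exact ENNReal.ofReal_le_ofReal hb
      calc ENNReal.ofReal (Real.exp (-(c2 * (↑(n + 1) + 1) / 2 * x ^ 2))) *
            ∫⁻ ω in A, ENNReal.ofReal (Real.exp (x * S (n + 1) ω)) ∂P ≤
          ENNReal.ofReal (Real.exp (-(c2 * (↑(n + 1) + 1) / 2 * x ^ 2))) *
            (ENNReal.ofReal (Real.exp (x ^ 2 * c2 / 2)) *
              ∫⁻ ω in A, ENNReal.ofReal (Real.exp (x * S n ω)) ∂P) :=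
            mul_le_mul_right hlin _
        _ = ENNReal.ofReal (Real.exp (-(c2 * (↑n + 1) / 2 * x ^ 2))) *
            ∫⁻ ω in A, ENNReal.ofReal (Real.exp (x * S n ω)) ∂P := by
            rw [← mul_assoc, ← ENNReal.ofReal_mul (Real.exp_pos _).le, ← Real.exp_add]
            congr 3
            push_cast
            ring
    calc ∫⁻ ω in A, ENNReal.ofReal (N (n + 1) ω) ∂P =
        ∫⁻ ω in A, ∫⁻ x : ℝ, ENNReal.ofReal
            (Real.exp (S (n + 1) ω * x - c2 * (↑(n + 1) + 1) / 2 * x ^ 2)) ∂(volume) ∂P :=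
          lintegral_congr fun ω => hrepL (n + 1) ω
      _ = ∫⁻ x : ℝ, ∫⁻ ω in A, ENNReal.ofReal
            (Real.exp (S (n + 1) ω * x - c2 * (↑(n + 1) + 1) / 2 * x ^ 2)) ∂P ∂(volume) :=
          lintegral_lintegral_swap (hGmeas (n + 1) _).aemeasurable
      _ ≤ ∫⁻ x : ℝ, ∫⁻ ω in A, ENNReal.ofReal
            (Real.exp (S n ω * x - c2 * (↑n + 1) / 2 * x ^ 2)) ∂P ∂(volume) :=
          lintegral_mono hperx
      _ = ∫⁻ ω in A, ∫⁻ x : ℝ, ENNReal.ofReal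
            (Real.exp (S n ω * x - c2 * (↑n + 1) / 2 * x ^ 2)) ∂(volume) ∂P :=
          (lintegral_lintegral_swap (hGmeas n _).aemeasurable).symm
      _ = ∫⁻ ω in A, ENNReal.ofReal (N n ω) ∂P :=
          lintegral_congr fun ω => (hrepL n ω).symm
  -- iterated supermartingale property
  have hstep' : ∀ (t : ℕ) (A : Set Ω), MeasurableSet[𝒢 t] A → ∀ n, t ≤ n →
      ∫⁻ ω in A, ENNReal.ofReal (N n ω) ∂P ≤
        ∫⁻ ω in A, ENNReal.ofReal (N t ω) ∂P := by
    intro t A hA n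
    induction n with
    | zero =>
      intro h
      obtain rfl : t = 0 := Nat.le_zero.1 h
      exact le_rfl
    | succ n ih =>
      intro h
      rcases Nat.lt_or_ge t (n + 1) with h' | h'
      · exact le_trans (hstep n A (𝒢.mono (by omega) _ hA)) (ih (by omega))
      · obtain rfl : t = n + 1 := by omega
        exact le_rfl
  -- Ville's inequality
  have hville : ∀ ε : ENNReal, ε ≠ 0 →
      ε * P {ω | ∃ T, ε ≤ ENNReal.ofReal (N T ω)} ≤ ENNReal.ofReal Z := by
    intro ε hε
    set B : ℕ → Set Ω := fun t =>
      {ω | ε ≤ ENNReal.ofReal (N t ω) ∧ ∀ s < t, ¬ ε ≤ ENNReal.ofReal (N s ω)} with hBdef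
    set C : ℕ → Set Ω := fun n =>
      {ω | ∀ s ≤ n, ¬ ε ≤ ENNReal.ofReal (N s ω)} with hCdef
    have hBmeas : ∀ t, MeasurableSet[𝒢 t] (B t) := by
      intro t
      have hBeq : B t = {ω | ε ≤ ENNReal.ofReal (N t ω)} ∩
          ⋂ s ∈ Finset.range t, {ω | ε ≤ ENNReal.ofReal (N s ω)}ᶜ := by
        ext ω
        simp only [hBdef, Set.mem_setOf_eq, Set.mem_inter_iff, Set.mem_iInter,
          Set.mem_compl_iff, Finset.mem_range]
      rw [hBeq]
      refine MeasurableSet.inter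
        (measurableSet_le measurable_const ((hNsm t).measurable.ennreal_ofReal)) ?_
      refine MeasurableSet.biInter (Set.to_countable _) fun s hs => ?_
      have hst : s < t := Finset.mem_range.1 hs
      exact (measurableSet_le measurable_const
        (((hNsm s).mono (𝒢.mono hst.le)).measurable.ennreal_ofReal)).compl
    have hCmeas : ∀ n, MeasurableSet[𝒢 n] (C n) := by
      intro n
      have hCeq : C n = ⋂ s ∈ Finset.range (n + 1),
          {ω | ε ≤ ENNReal.ofReal (N s ω)}ᶜ := by
        ext ω
        simp only [hCdef, Set.mem_setOf_eq, Set.mem_iInter, Set.mem_compl_iff,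
          Finset.mem_range, Nat.lt_succ_iff]
      rw [hCeq]
      refine MeasurableSet.biInter (Set.to_countable _) fun s hs => ?_
      have hst : s ≤ n := Nat.lt_succ_iff.1 (Finset.mem_range.1 hs)
      exact (measurableSet_le measurable_const
        (((hNsm s).mono (𝒢.mono hst)).measurable.ennreal_ofReal)).compl
    have hCsplit : ∀ n, C n = B (n + 1) ∪ C (n + 1) := by
      intro n
      ext ω
      simp only [hBdef, hCdef, Set.mem_setOf_eq, Set.mem_union]
      constructor
      · intro h
        by_cases hh : ε ≤ ENNReal.ofReal (N (n + 1) ω)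
        · exact Or.inl ⟨hh, fun s hs => h s (by omega)⟩
        · refine Or.inr fun s hs => ?_
          rcases Nat.lt_or_ge s (n + 1) with h' | h'
          · exact h s (by omega)
          · have : s = n + 1 := by omega
            rw [this]; exact hh
      · rintro (h | h) s hs
        · exact h.2 s (by omega)
        · exact h s (by omega)
    have hdisjBC : ∀ n, Disjoint (B (n + 1)) (C (n + 1)) := by
      intro n
      rw [Set.disjoint_left]
      intro ω h1 h2
      exact h2 (n + 1) le_rfl h1.1
    have hN0 : ∀ ω, N 0 ω = Z := by
      intro ω
      simp only [hNdef, hSdef]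
      rw [Finset.Icc_eq_empty (by omega)]
      simp [hZdef]
    set R : ℕ → ENNReal := fun n =>
      (∑ t ∈ Finset.range (n + 1), ∫⁻ ω in B t, ENNReal.ofReal (N t ω) ∂P) +
        ∫⁻ ω in C n, ENNReal.ofReal (N n ω) ∂P with hRdef
    have hB0C0 : B 0 ∪ C 0 = Set.univ := by
      ext ω
      simp only [hBdef, hCdef, Set.mem_union, Set.mem_setOf_eq, Set.mem_univ, iff_true]
      by_cases hh : ε ≤ ENNReal.ofReal (N 0 ω)
      · exact Or.inl ⟨hh, fun s hs => by omega⟩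
      · refine Or.inr fun s hs => ?_
        have : s = 0 := by omega
        rw [this]; exact hh
    have hdisj0 : Disjoint (B 0) (C 0) := by
      rw [Set.disjoint_left]
      intro ω h1 h2
      exact h2 0 le_rfl h1.1
    have hR0 : R 0 = ENNReal.ofReal Z := by
      simp only [hRdef, zero_add, Finset.sum_range_one]
      rw [← lintegral_union (𝒢.le 0 _ (hCmeas 0)) hdisj0, hB0C0, Measure.restrict_univ]
      have : ∀ ω, ENNReal.ofReal (N 0 ω) = ENNReal.ofReal Z := fun ω => by rw [hN0 ω]
      rw [lintegral_congr this, lintegral_const, measure_univ, mul_one]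
    have hRstep : ∀ n, R (n + 1) ≤ R n := by
      intro n
      simp only [hRdef]
      rw [Finset.sum_range_succ _ (n + 1)]
      have hunion : ∫⁻ ω in B (n + 1), ENNReal.ofReal (N (n + 1) ω) ∂P +
          ∫⁻ ω in C (n + 1), ENNReal.ofReal (N (n + 1) ω) ∂P =
          ∫⁻ ω in C n, ENNReal.ofReal (N (n + 1) ω) ∂P := by
        rw [hCsplit n]
        exact (lintegral_union (𝒢.le (n + 1) _ (hCmeas (n + 1))) (hdisjBC n)).symm
      calc (∑ t ∈ Finset.range (n + 1), ∫⁻ ω in B t, ENNReal.ofReal (N t ω) ∂P) +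
            ∫⁻ ω in B (n + 1), ENNReal.ofReal (N (n + 1) ω) ∂P +
            ∫⁻ ω in C (n + 1), ENNReal.ofReal (N (n + 1) ω) ∂P =
          (∑ t ∈ Finset.range (n + 1), ∫⁻ ω in B t, ENNReal.ofReal (N t ω) ∂P) +
            ∫⁻ ω in C n, ENNReal.ofReal (N (n + 1) ω) ∂P := by
            rw [add_assoc, hunion]
        _ ≤ (∑ t ∈ Finset.range (n + 1), ∫⁻ ω in B t, ENNReal.ofReal (N t ω) ∂P) +
            ∫⁻ ω in C n, ENNReal.ofReal (N n ω) ∂P :=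
            add_le_add_right (hstep n (C n) (hCmeas n)) _
    have hRbound : ∀ n, R n ≤ ENNReal.ofReal Z := by
      intro n
      induction n with
      | zero => exact le_of_eq hR0
      | succ n ih => exact le_trans (hRstep n) ih
    have hmarkov : ∀ t, ε * P (B t) ≤ ∫⁻ ω in B t, ENNReal.ofReal (N t ω) ∂P := by
      intro t
      rw [← setLIntegral_const (B t) ε]
      exact setLIntegral_mono ((hNm t).ennreal_ofReal) fun ω hω => hω.1
    have hBdisj : ∀ i j, i < j → Disjoint (B i) (B j) := by
      intro i j hij
      rw [Set.disjoint_left]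
      intro ω hi hj
      exact hj.2 i hij hi.1
    set D : ℕ → Set Ω := fun n => ⋃ t ∈ Finset.range (n + 1), B t with hDdef
    have hDbound : ∀ n, ε * P (D n) ≤ ENNReal.ofReal Z := by
      intro n
      have hPD : P (D n) = ∑ t ∈ Finset.range (n + 1), P (B t) := by
        rw [hDdef]
        refine measure_biUnion_finset ?_ fun t _ => 𝒢.le t _ (hBmeas t)
        intro i _ j _ hij
        rcases Nat.lt_or_ge i j with h | h
        · exact hBdisj i j h
        · exact (hBdisj j i (by omega)).symm
      calc ε * P (D n) = ∑ t ∈ Finset.range (n + 1), ε * P (B t) := by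
            rw [hPD, Finset.mul_sum]
        _ ≤ ∑ t ∈ Finset.range (n + 1), ∫⁻ ω in B t, ENNReal.ofReal (N t ω) ∂P :=
            Finset.sum_le_sum fun t _ => hmarkov t
        _ ≤ R n := by simp only [hRdef]; exact self_le_add_right _ _
        _ ≤ ENNReal.ofReal Z := hRbound n
    have hsub : {ω | ∃ T, ε ≤ ENNReal.ofReal (N T ω)} ⊆ ⋃ n, D n := by
      rintro ω ⟨T, hT⟩
      have hex : ∃ t, ε ≤ ENNReal.ofReal (N t ω) := ⟨T, hT⟩
      refine Set.mem_iUnion.2 ⟨Nat.find hex, ?_⟩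
      rw [hDdef]
      refine Set.mem_biUnion (Finset.mem_range.2 (Nat.lt_succ_self _)) ?_
      exact ⟨Nat.find_spec hex, fun s hs => Nat.find_min hex hs⟩
    have hdir : Directed (· ⊆ ·) D := by
      refine Monotone.directed_le ?_
      intro m n hmn
      rw [hDdef]
      exact Set.biUnion_subset_biUnion_left (Finset.range_subset_range.2 (by omega))
    calc ε * P {ω | ∃ T, ε ≤ ENNReal.ofReal (N T ω)} ≤ ε * P (⋃ n, D n) :=
          mul_le_mul_right (measure_mono hsub) ε
      _ = ε * ⨆ n, P (D n) := by rw [hdir.measure_iUnion]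
      _ = ⨆ n, ε * P (D n) := by rw [ENNReal.mul_iSup]
      _ ≤ ENNReal.ofReal Z := iSup_le hDbound
  -- event inclusion
  have hincl : {ω | ∃ T : ℕ, 1 ≤ T ∧
        ∑ t ∈ Finset.Icc 1 T, X t ω ≥
          (b - a) * Real.sqrt ((T + 1) / 2 * Real.log (Real.sqrt (T + 1) / δ))} ⊆
      {ω | ∃ T, ENNReal.ofReal (Z / δ) ≤ ENNReal.ofReal (N T ω)} := by
    rintro ω ⟨T, _hT1, hTev⟩
    refine ⟨T, ENNReal.ofReal_le_ofReal ?_⟩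
    set L : ℝ := Real.log (Real.sqrt (T + 1) / δ) with hLdef
    have hsq : (1:ℝ) ≤ Real.sqrt (T + 1) := by
      rw [show (1:ℝ) = Real.sqrt 1 by simp]
      refine Real.sqrt_le_sqrt ?_
      have hT0 : (0:ℝ) ≤ (T:ℝ) := Nat.cast_nonneg T
      linarith [Real.sqrt_one]
    have hL : 0 < L := Real.log_pos (by
      rw [lt_div_iff₀ hδ0]
      nlinarith)
    have hu0 : 0 ≤ (b - a) * Real.sqrt ((T + 1) / 2 * L) := by positivity
    have hS0 : 0 ≤ S T ω := le_trans hu0 hTev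
    have hSsq : ((b - a) * Real.sqrt ((T + 1) / 2 * L)) ^ 2 ≤ S T ω ^ 2 := by
      exact pow_le_pow_left₀ hu0 hTev 2
    have husq : ((b - a) * Real.sqrt ((T + 1) / 2 * L)) ^ 2 =
        (b - a) ^ 2 * ((T + 1) / 2 * L) := by
      rw [mul_pow, Real.sq_sqrt (by positivity)]
    have hexp : Real.sqrt (T + 1) / δ ≤ Real.exp (S T ω ^ 2 / (2 * (c2 * (T + 1)))) := by
      rw [show Real.sqrt (T + 1) / δ = Real.exp L from
        (Real.exp_log (by positivity)).symm]
      apply Real.exp_le_exp.2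
      rw [husq] at hSsq
      rw [le_div_iff₀ (by positivity)]
      calc L * (2 * (c2 * (T + 1))) = (b - a) ^ 2 * ((T + 1) / 2 * L) := by
            rw [hc2def]; ring
        _ ≤ S T ω ^ 2 := hSsq
    have hZsplit : Real.sqrt (2 * Real.pi / (c2 * (T + 1))) =
        Z / Real.sqrt (T + 1) := by
      rw [hZdef, ← Real.sqrt_div (by positivity)]
      congr 1
      field_simp
    calc Z / δ = Z / Real.sqrt (T + 1) * (Real.sqrt (T + 1) / δ) := by
          field_simp
      _ ≤ Z / Real.sqrt (T + 1) * Real.exp (S T ω ^ 2 / (2 * (c2 * (T + 1)))) := by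
          apply mul_le_mul_of_nonneg_left hexp (by positivity)
      _ = N T ω := by simp only [hNdef]; rw [hZsplit]
  -- conclude
  have hε0 : (ENNReal.ofReal (Z / δ)) ≠ 0 := by
    simp [ENNReal.ofReal_eq_zero, not_le, div_pos hZ hδ0]
  have hfin := hville (ENNReal.ofReal (Z / δ)) hε0
  have hmono := measure_mono (μ := P) hincl
  have h1 : ENNReal.ofReal (Z / δ) * P {ω | ∃ T : ℕ, 1 ≤ T ∧
        ∑ t ∈ Finset.Icc 1 T, X t ω ≥
          (b - a) * Real.sqrt ((T + 1) / 2 * Real.log (Real.sqrt (T + 1) / δ))} ≤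
      ENNReal.ofReal Z := le_trans (mul_le_mul_right hmono _) hfin
  have hZeq : ENNReal.ofReal Z = ENNReal.ofReal (Z / δ) * ENNReal.ofReal δ := by
    rw [← ENNReal.ofReal_mul (by positivity)]
    congr 1
    field_simp
  rw [hZeq] at h1
  exact (ENNReal.mul_le_mul_iff_right hε0 ENNReal.ofReal_ne_top).1 h1
end

section
/- Let (ν_k(s))_{k=1}^{m}, for s ranging over a finite set Σ, be nonnegative reals, let N_k(s) := max(1, ∑_{j<k} ν_j(s)), and assume ν_k(s) ≤ N_k(s) for all k, s. Then ∑_{s∈Σ} ∑_{k=1}^{m} ν_k(s)/√(N_k(s)) ≤ (√2 + 1)·√(|Σ| · T), where T := ∑_{s∈Σ} ∑_{k=1}^{m} ν_k(s). -/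
lemma stmt_18_aux (a v : ℝ) (ha : 0 ≤ a) (hv : 0 ≤ v) (hvn : v ≤ max 1 a) :
    v / Real.sqrt (max 1 a) ≤ (Real.sqrt 2 + 1) * (Real.sqrt (a + v) - Real.sqrt a) := by
  set n := max 1 a with hn
  have hn1 : (1 : ℝ) ≤ n := le_max_left _ _
  have hn0 : (0 : ℝ) < n := lt_of_lt_of_le one_pos hn1
  have hsn : 0 < Real.sqrt n := Real.sqrt_pos.mpr hn0
  rw [div_le_iff₀ hsn]
  have h2 : Real.sqrt (a + v) ≤ Real.sqrt 2 * Real.sqrt n := by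
    rw [← Real.sqrt_mul (by norm_num)]
    apply Real.sqrt_le_sqrt
    have han : a ≤ n := le_max_right _ _
    nlinarith
  have h3 : Real.sqrt a ≤ Real.sqrt n := Real.sqrt_le_sqrt (le_max_right _ _)
  have h1 : Real.sqrt (a + v) + Real.sqrt a ≤ (Real.sqrt 2 + 1) * Real.sqrt n := by
    nlinarith
  have hvid : v = (Real.sqrt (a + v) - Real.sqrt a) * (Real.sqrt (a + v) + Real.sqrt a) := by
    have e1 := Real.sq_sqrt (by linarith : (0:ℝ) ≤ a + v)
    have e2 := Real.sq_sqrt ha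
    nlinarith
  have hd : 0 ≤ Real.sqrt (a + v) - Real.sqrt a := by
    have := Real.sqrt_le_sqrt (by linarith : a ≤ a + v)
    linarith
  nlinarith [mul_le_mul_of_nonneg_left h1 hd]

theorem stmt_18 {St : Type*} [Fintype St] (m : ℕ) (ν : ℕ → St → ℝ)
    (N : ℕ → St → ℝ)
    (hN : ∀ k s, N k s = max 1 (∑ j ∈ Finset.Icc 1 (k - 1), ν j s))
    (hν0 : ∀ k ∈ Finset.Icc 1 m, ∀ s, 0 ≤ ν k s)
    (hνN : ∀ k ∈ Finset.Icc 1 m, ∀ s, ν k s ≤ N k s)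
    (T : ℝ) (hT : T = ∑ s, ∑ k ∈ Finset.Icc 1 m, ν k s) :
    ∑ s, ∑ k ∈ Finset.Icc 1 m, ν k s / Real.sqrt (N k s) ≤
      (Real.sqrt 2 + 1) * Real.sqrt ((Fintype.card St : ℝ) * T) := by
  classical
  set A : ℕ → St → ℝ := fun k s => ∑ j ∈ Finset.Icc 1 k, ν j s with hA
  have hAnn : ∀ k, k ≤ m → ∀ s, 0 ≤ A k s := by
    intro k hk s
    apply Finset.sum_nonneg
    intro j hj
    rw [Finset.mem_Icc] at hj
    exact hν0 j (Finset.mem_Icc.mpr ⟨hj.1, hj.2.trans hk⟩) s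
  have key : ∀ s, ∑ k ∈ Finset.Icc 1 m, ν k s / Real.sqrt (N k s)
      ≤ (Real.sqrt 2 + 1) * Real.sqrt (A m s) := by
    intro s
    have hshift : ∑ k ∈ Finset.Icc 1 m, ν k s / Real.sqrt (N k s)
        = ∑ i ∈ Finset.range m, ν (1 + i) s / Real.sqrt (N (1 + i) s) := by
      rw [show Finset.Icc 1 m = Finset.Ico 1 (m + 1) by rfl, Finset.sum_Ico_eq_sum_range]
      simp
    rw [hshift]
    have hterm : ∀ i ∈ Finset.range m,
        ν (1 + i) s / Real.sqrt (N (1 + i) s)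
          ≤ (Real.sqrt 2 + 1) * (Real.sqrt (A (i + 1) s) - Real.sqrt (A i s)) := by
      intro i hi
      rw [Finset.mem_range] at hi
      have hmem : 1 + i ∈ Finset.Icc 1 m := Finset.mem_Icc.mpr ⟨by omega, by omega⟩
      have hNs : N (1 + i) s = max 1 (A i s) := by
        rw [hN, Nat.add_sub_cancel_left]
      have hAi : A (i + 1) s = A i s + ν (1 + i) s := by
        have : A (i + 1) s = A i s + ν (i + 1) s :=
          Finset.sum_Icc_succ_top (by omega) _
        simpa [Nat.add_comm] using this
      have h1 := stmt_18_aux (A i s) (ν (1 + i) s) (hAnn i (by omega) s)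
        (hν0 _ hmem s) (hNs ▸ hνN _ hmem s)
      rw [hNs, hAi]
      exact h1
    calc ∑ i ∈ Finset.range m, ν (1 + i) s / Real.sqrt (N (1 + i) s)
        ≤ ∑ i ∈ Finset.range m,
            (Real.sqrt 2 + 1) * (Real.sqrt (A (i + 1) s) - Real.sqrt (A i s)) :=
          Finset.sum_le_sum hterm
      _ = (Real.sqrt 2 + 1) * (Real.sqrt (A m s) - Real.sqrt (A 0 s)) := by
          rw [← Finset.mul_sum, Finset.sum_range_sub (fun i => Real.sqrt (A i s))]
      _ ≤ (Real.sqrt 2 + 1) * Real.sqrt (A m s) := by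
          have : Real.sqrt (A 0 s) = 0 := by simp [hA]
          rw [this, sub_zero]
  have hsum : ∑ s, ∑ k ∈ Finset.Icc 1 m, ν k s / Real.sqrt (N k s)
      ≤ (Real.sqrt 2 + 1) * ∑ s, Real.sqrt (A m s) := by
    rw [Finset.mul_sum]
    exact Finset.sum_le_sum fun s _ => key s
  refine hsum.trans ?_
  have hsqrt2 : 0 ≤ Real.sqrt 2 + 1 := by positivity
  apply mul_le_mul_of_nonneg_left _ hsqrt2
  have hCS : (∑ s, Real.sqrt (A m s)) ^ 2 ≤ (Fintype.card St : ℝ) * T := by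
    have := sq_sum_le_card_mul_sum_sq (s := Finset.univ)
      (f := fun s : St => Real.sqrt (A m s))
    have hsq : ∑ s, Real.sqrt (A m s) ^ 2 = T := by
      rw [hT]
      apply Finset.sum_congr rfl
      intro s _
      rw [Real.sq_sqrt (hAnn m le_rfl s)]
    simpa [Finset.card_univ, hsq] using this
  have hnn : 0 ≤ ∑ s, Real.sqrt (A m s) :=
    Finset.sum_nonneg fun s _ => Real.sqrt_nonneg _
  calc ∑ s, Real.sqrt (A m s)
      = Real.sqrt ((∑ s, Real.sqrt (A m s)) ^ 2) := by rw [Real.sqrt_sq hnn]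
    _ ≤ Real.sqrt ((Fintype.card St : ℝ) * T) := Real.sqrt_le_sqrt hCS
end
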